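/- Partial derivative of the entropy mix along a 3-Lax curve at the base point: let γ > 1, c_v > 0, let m ≥ 1, and for j = 1, …, m let a_j > 0 be weights and (ρ̄_j, q̄_j, Ē_j) gas states with ρ̄_j > 0, velocities ū_j, pressures p̄_j > 0, sound speeds c̄_j = √(γp̄_j/ρ̄_j) and entropies s̄_j, such that the denominator D := ∑_{j=1}^m a_j q̄_j is nonzero. Let Q_j(σ) = φ_j(σ)(ū_j + ψ_j(σ)) and S_j(σ) = c_v·ln(σ/φ_j(σ)^γ) be the mass flux and entropy along the 3-Lax curve of pipe j, and for a fixed index j₀ define g(σ) := (a_{j₀}·Q_{j₀}(σ)S_{j₀}(σ) + ∑_{j≠j₀} a_j·q̄_j s̄_j) / (a_{j₀}·Q_{j₀}(σ) + ∑_{j≠j₀} a_j·q̄_j), i.e., the entropy mix s* with the state of pipe j₀ moved along its 3-Lax curve. Then g has derivative at σ = p̄_{j₀} equal to g′(p̄_{j₀}) = (a_{j₀}·(ū_{j₀} + c̄_{j₀})/(c̄_{j₀}²·D))·(s̄_{j₀} − s̄*), where s̄* = (∑_{j=1}^m a_j q̄_j s̄_j)/D. -/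

import Mathlib

/-- The velocity function `ψ` of the Lax-curve parametrisation. -/
noncomputable def laxPsi (γ ρ p : ℝ) (σ : ℝ) : ℝ :=
  if σ ≤ p then
    (2 * Real.sqrt (γ * p / ρ) / (γ - 1)) * ((σ / p) ^ ((γ - 1) / (2 * γ)) - 1)
  else
    (σ - p) * Real.sqrt ((1 - (γ - 1) / (γ + 1)) / (ρ * (σ + ((γ - 1) / (γ + 1)) * p)))

/-- The density function `φ` of the Lax-curve parametrisation. -/
noncomputable def laxPhi (γ ρ p : ℝ) (σ : ℝ) : ℝ :=
  if σ ≤ p then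
    ρ * (σ / p) ^ (1 / γ)
  else
    ρ * (σ + ((γ - 1) / (γ + 1)) * p) / (((γ - 1) / (γ + 1)) * σ + p)

open Set in
theorem hasDerivAt_piecewise {f g : ℝ → ℝ} {d p : ℝ}
    (hf : HasDerivAt f d p) (hg : HasDerivAt g d p) (hfg : f p = g p) :
    HasDerivAt (fun σ => if σ ≤ p then f σ else g σ) d p := by
  have h1 : HasDerivWithinAt (fun σ => if σ ≤ p then f σ else g σ) d (Iic p) p :=
    (hf.hasDerivWithinAt).congr (fun x hx => by simp [mem_Iic.mp hx]) (by simp)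
  have h2 : HasDerivWithinAt (fun σ => if σ ≤ p then f σ else g σ) d (Ici p) p := by
    refine (hg.hasDerivWithinAt).congr (fun x hx => ?_) (by simp [hfg])
    by_cases h : x ≤ p
    · have : x = p := le_antisymm h hx
      simp [this, hfg]
    · simp [h]
  have := h1.union h2
  rw [Iic_union_Ici] at this
  exact (hasDerivWithinAt_univ.mp this)

theorem hasDerivAt_laxPhi {γ ρ p : ℝ} (hγ : 1 < γ) (hρ : 0 < ρ) (hp : 0 < p) :
    HasDerivAt (laxPhi γ ρ p) (ρ / (γ * p)) p := by
  have hγ0 : (0:ℝ) < γ := by linarith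
  have hγ1 : (0:ℝ) < γ + 1 := by linarith
  set k : ℝ := (γ - 1) / (γ + 1) with hk
  have hk0 : 0 < k := div_pos (by linarith) hγ1
  have hkp : 0 < k * p + p := by positivity
  -- left branch
  have hL : HasDerivAt (fun σ : ℝ => ρ * (σ / p) ^ (1 / γ)) (ρ / (γ * p)) p := by
    have h1 : HasDerivAt (fun σ : ℝ => σ / p) (1 / p) p := by
      simpa using (hasDerivAt_id p).div_const p
    have h2 := (h1.rpow_const (p := 1 / γ) (Or.inl (by simp [div_self hp.ne']))).const_mul ρ
    refine HasDerivAt.congr_deriv h2 ?_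
    symm
    rw [div_self hp.ne', Real.one_rpow]
    field_simp
  -- right branch
  have hR : HasDerivAt (fun σ : ℝ => ρ * (σ + k * p) / (k * σ + p)) (ρ / (γ * p)) p := by
    have h1 : HasDerivAt (fun σ : ℝ => ρ * (σ + k * p)) ρ p := by
      simpa using (((hasDerivAt_id p).add_const (k * p)).const_mul ρ)
    have h2 : HasDerivAt (fun σ : ℝ => k * σ + p) k p := by
      simpa using ((hasDerivAt_id p).const_mul k).add_const p
    have h3 := h1.div h2 hkp.ne'
    refine HasDerivAt.congr_deriv h3 ?_
    symm
    rw [div_eq_div_iff (by positivity) (by positivity), hk]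
    field_simp
    ring
  have := hasDerivAt_piecewise hL hR ?_
  · exact this
  · rw [div_self hp.ne', Real.one_rpow, mul_one,
      show ρ * (p + k * p) = ρ * (k * p + p) by ring, mul_div_assoc, div_self hkp.ne', mul_one]


theorem hasDerivAt_laxPsi {γ ρ p : ℝ} (hγ : 1 < γ) (hρ : 0 < ρ) (hp : 0 < p) :
    HasDerivAt (laxPsi γ ρ p) (1 / (ρ * Real.sqrt (γ * p / ρ))) p := by
  have hγ0 : (0:ℝ) < γ := by linarith
  have hγ1 : (0:ℝ) < γ + 1 := by linarith
  have hγm : γ - 1 ≠ 0 := ne_of_gt (by linarith)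
  set c : ℝ := Real.sqrt (γ * p / ρ) with hc
  have hcpos : 0 < c := Real.sqrt_pos.mpr (by positivity)
  have hc2 : c ^ 2 = γ * p / ρ := Real.sq_sqrt (by positivity)
  set k : ℝ := (γ - 1) / (γ + 1) with hk
  have hk0 : 0 < k := div_pos (by linarith) hγ1
  have hk1 : k < 1 := (div_lt_one hγ1).mpr (by linarith)
  have hkp : 0 < p + k * p := by positivity
  -- left branch
  have hL : HasDerivAt (fun σ : ℝ => (2 * c / (γ - 1)) * ((σ / p) ^ ((γ - 1) / (2 * γ)) - 1))
      (1 / (ρ * c)) p := by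
    have h1 : HasDerivAt (fun σ : ℝ => σ / p) (1 / p) p := by
      simpa using (hasDerivAt_id p).div_const p
    have h2 := (((h1.rpow_const (p := (γ - 1) / (2 * γ))
      (Or.inl (by simp [div_self hp.ne'])))).sub_const 1).const_mul (2 * c / (γ - 1))
    refine HasDerivAt.congr_deriv h2 ?_
    symm
    rw [div_self hp.ne', Real.one_rpow, mul_one]
    have hgoal : 1 / (ρ * c) = c / (γ * p) := by
      rw [div_eq_div_iff (by positivity) (by positivity), one_mul]
      have h3 : c * (ρ * c) = ρ * c ^ 2 := by ring
      rw [h3, hc2]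
      field_simp
    rw [hgoal]
    field_simp
  -- right branch
  have hR : HasDerivAt (fun σ : ℝ => (σ - p) * Real.sqrt ((1 - k) / (ρ * (σ + k * p))))
      (1 / (ρ * c)) p := by
    have h1 : HasDerivAt (fun σ : ℝ => σ - p) 1 p := (hasDerivAt_id p).sub_const p
    have hin : HasDerivAt (fun σ : ℝ => (1 - k) / (ρ * (σ + k * p)))
        ((0 * (ρ * (p + k * p)) - (1 - k) * ρ) / (ρ * (p + k * p)) ^ 2) p := by
      exact (hasDerivAt_const p (1 - k)).div
        (by simpa using (((hasDerivAt_id p).add_const (k * p)).const_mul ρ)) (by positivity)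
    have hval : (1 - k) / (ρ * (p + k * p)) ≠ 0 :=
      ne_of_gt (div_pos (by linarith) (by positivity))
    have h2 := h1.mul (hin.sqrt hval)
    refine HasDerivAt.congr_deriv h2 ?_
    symm
    rw [sub_self, zero_mul, add_zero, one_mul]
    have harg : (1 - k) / (ρ * (p + k * p)) = (1 / (ρ * c)) ^ 2 := by
      rw [div_pow, one_pow, mul_pow, hc2]
      rw [div_eq_div_iff (by positivity) (by positivity), hk]
      field_simp
      ring
    rw [harg, Real.sqrt_sq (by positivity)]
  have heq : (2 * c / (γ - 1)) * ((p / p) ^ ((γ - 1) / (2 * γ)) - 1)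
      = (p - p) * Real.sqrt ((1 - k) / (ρ * (p + k * p))) := by
    rw [div_self hp.ne', Real.one_rpow, sub_self, sub_self, mul_zero, zero_mul]
  unfold laxPsi
  exact hasDerivAt_piecewise hL hR heq

theorem laxPhi_base {γ ρ p : ℝ} (hp : 0 < p) : laxPhi γ ρ p p = ρ := by
  unfold laxPhi
  rw [if_pos le_rfl, div_self hp.ne', Real.one_rpow, mul_one]

theorem laxPsi_base {γ ρ p : ℝ} (hp : 0 < p) : laxPsi γ ρ p p = 0 := by
  unfold laxPsi
  rw [if_pos le_rfl, div_self hp.ne', Real.one_rpow, sub_self, mul_zero]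

theorem entropy_mix_deriv_along_lax3
    (γ cv : ℝ) (hγ : 1 < γ) (hcv : 0 < cv)
    (m : ℕ) (hm : 1 ≤ m)
    (a ρ q E ub pb cb sb : Fin m → ℝ)
    (ha : ∀ j, 0 < a j) (hρ : ∀ j, 0 < ρ j)
    (hub : ∀ j, ub j = q j / ρ j)
    (hpb : ∀ j, pb j = (γ - 1) * (E j - (q j) ^ 2 / (2 * ρ j)))
    (hppos : ∀ j, 0 < pb j)
    (hcb : ∀ j, cb j = Real.sqrt (γ * pb j / ρ j))
    (hsb : ∀ j, sb j = cv * Real.log (pb j / ρ j ^ γ))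
    (D : ℝ) (hDdef : D = ∑ j, a j * q j) (hD : D ≠ 0)
    (j₀ : Fin m)
    (sstar : ℝ) (hsstar : sstar = (∑ j, a j * q j * sb j) / D) :
    HasDerivAt
      (fun σ : ℝ =>
        (a j₀ * (laxPhi γ (ρ j₀) (pb j₀) σ * (ub j₀ + laxPsi γ (ρ j₀) (pb j₀) σ)) *
              (cv * Real.log (σ / laxPhi γ (ρ j₀) (pb j₀) σ ^ γ)) +
            ∑ j ∈ Finset.univ.erase j₀, a j * q j * sb j) /
          (a j₀ * (laxPhi γ (ρ j₀) (pb j₀) σ * (ub j₀ + laxPsi γ (ρ j₀) (pb j₀) σ)) +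
            ∑ j ∈ Finset.univ.erase j₀, a j * q j))
      (a j₀ * (ub j₀ + cb j₀) / (cb j₀ ^ 2 * D) * (sb j₀ - sstar))
      (pb j₀) := by
  have hρ0 := hρ j₀
  have hp0 := hppos j₀
  have hγ0 : (0:ℝ) < γ := by linarith
  have hcpos : 0 < cb j₀ := by rw [hcb j₀]; exact Real.sqrt_pos.mpr (by positivity)
  have hc2 : cb j₀ ^ 2 = γ * pb j₀ / ρ j₀ := by
    rw [hcb j₀]; exact Real.sq_sqrt (by positivity)
  have hφ := hasDerivAt_laxPhi (γ := γ) hγ hρ0 hp0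
  have hψ := hasDerivAt_laxPsi (γ := γ) hγ hρ0 hp0
  have hφp : laxPhi γ (ρ j₀) (pb j₀) (pb j₀) = ρ j₀ := laxPhi_base hp0
  have hψp : laxPsi γ (ρ j₀) (pb j₀) (pb j₀) = 0 := laxPsi_base hp0
  -- Q and its derivative
  have hQ : HasDerivAt (fun σ => laxPhi γ (ρ j₀) (pb j₀) σ * (ub j₀ + laxPsi γ (ρ j₀) (pb j₀) σ))
      ((ub j₀ + cb j₀) / cb j₀ ^ 2) (pb j₀) := by
    have h := hφ.mul (hψ.const_add (ub j₀))
    refine HasDerivAt.congr_deriv h ?_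
    symm
    rw [hφp, hψp, ← hcb j₀, add_zero]
    have h1 : ρ j₀ / (γ * pb j₀) = 1 / cb j₀ ^ 2 := by
      rw [hc2, one_div_div]
    rw [h1]
    field_simp
  have hQp : laxPhi γ (ρ j₀) (pb j₀) (pb j₀) *
      (ub j₀ + laxPsi γ (ρ j₀) (pb j₀) (pb j₀)) = q j₀ := by
    rw [hφp, hψp, hub j₀, add_zero, mul_div_cancel₀ _ hρ0.ne']
  -- S and its derivative (zero)
  have hS : HasDerivAt (fun σ => cv * Real.log (σ / laxPhi γ (ρ j₀) (pb j₀) σ ^ γ))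
      0 (pb j₀) := by
    have hL : HasDerivAt
        (fun σ => cv * (Real.log σ - γ * Real.log (laxPhi γ (ρ j₀) (pb j₀) σ)))
        (cv * ((pb j₀)⁻¹ - γ * (ρ j₀ / (γ * pb j₀) / laxPhi γ (ρ j₀) (pb j₀) (pb j₀))))
        (pb j₀) :=
      ((Real.hasDerivAt_log hp0.ne').sub
        ((hφ.log (by rw [hφp]; exact hρ0.ne')).const_mul γ)).const_mul cv
    have hev : ∀ᶠ σ in nhds (pb j₀), 0 < laxPhi γ (ρ j₀) (pb j₀) σ := by
      have h := hφ.continuousAt.preimage_mem_nhds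
        (Ioi_mem_nhds (show (0:ℝ) < laxPhi γ (ρ j₀) (pb j₀) (pb j₀) by rw [hφp]; exact hρ0))
      filter_upwards [h] with σ hσ using hσ
    have hev2 : ∀ᶠ σ in nhds (pb j₀), 0 < σ := eventually_gt_nhds hp0
    have heq : (fun σ => cv * Real.log (σ / laxPhi γ (ρ j₀) (pb j₀) σ ^ γ))
        =ᶠ[nhds (pb j₀)]
        (fun σ => cv * (Real.log σ - γ * Real.log (laxPhi γ (ρ j₀) (pb j₀) σ))) := by
      filter_upwards [hev, hev2] with σ h1 h2
      rw [Real.log_div h2.ne' (Real.rpow_pos_of_pos h1 γ).ne', Real.log_rpow h1]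
    have := hL.congr_of_eventuallyEq heq
    refine HasDerivAt.congr_deriv this ?_
    symm
    rw [hφp]
    field_simp
    ring
  -- assemble numerator and denominator
  have hN := ((hQ.const_mul (a j₀)).mul hS).add_const
    (∑ j ∈ Finset.univ.erase j₀, a j * q j * sb j)
  have hM := (hQ.const_mul (a j₀)).add_const (∑ j ∈ Finset.univ.erase j₀, a j * q j)
  have hMp : a j₀ * (laxPhi γ (ρ j₀) (pb j₀) (pb j₀) *
      (ub j₀ + laxPsi γ (ρ j₀) (pb j₀) (pb j₀))) +
      ∑ j ∈ Finset.univ.erase j₀, a j * q j = D := by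
    rw [hQp, hDdef]
    exact Finset.add_sum_erase Finset.univ (fun j => a j * q j) (Finset.mem_univ j₀)
  have hNp : a j₀ * (laxPhi γ (ρ j₀) (pb j₀) (pb j₀) *
      (ub j₀ + laxPsi γ (ρ j₀) (pb j₀) (pb j₀))) *
      (cv * Real.log (pb j₀ / laxPhi γ (ρ j₀) (pb j₀) (pb j₀) ^ γ)) +
      ∑ j ∈ Finset.univ.erase j₀, a j * q j * sb j = sstar * D := by
    rw [hQp, hφp, ← hsb j₀, hsstar, div_mul_cancel₀ _ hD]
    exact Finset.add_sum_erase Finset.univ (fun j => a j * q j * sb j) (Finset.mem_univ j₀)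
  have hdiv := hN.div hM (by rw [hMp]; exact hD)
  refine HasDerivAt.congr_deriv hdiv ?_
  symm
  simp only [Pi.mul_apply]
  rw [hMp, hNp, mul_zero, add_zero, hφp, ← hsb j₀]
  field_simp
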